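/- The real Lie algebra of Jordan derivations of H₂(ℍ), the hermitian 2×2 quaternionic matrices with Jordan product X∘Y = X*Y + Y*X (derivations taken with the commutator bracket of endomorphisms), is isomorphic to so(5), the Lie algebra of skew-symmetric real 5×5 matrices with the commutator bracket. -/

import Mathlib

open Matrix Quaternion

attribute [local instance 100] LieRing.ofAssociativeRing

instance : StarModule ℝ ℍ[ℝ] := ⟨fun r q => by ext <;> simp⟩

/-- The real vector space `H₂(ℍ)` of hermitian 2×2 quaternionic matrices, as a submodule of
the 3×3 quaternionic matrices. -/
noncomputable def herm2H : Submodule ℝ (Matrix (Fin 2) (Fin 2) ℍ[ℝ]) where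
  carrier := {H | Hᴴ = H}
  add_mem' := by
    intro a b ha hb
    simp only [Set.mem_setOf_eq] at *
    rw [conjTranspose_add, ha, hb]
  zero_mem' := by simp [Set.mem_setOf_eq]
  smul_mem' := by
    intro r H hH
    simp only [Set.mem_setOf_eq] at *
    rw [conjTranspose_smul, hH, star_trivial]

/-- The Jordan product `H∘K = HK + KH` on `H₂(ℍ)`. -/
noncomputable def jp2 (H K : herm2H) : herm2H :=
  ⟨H.1 * K.1 + K.1 * H.1, by
    have hH : (H.1)ᴴ = H.1 := H.2
    have hK : (K.1)ᴴ = K.1 := K.2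
    show (H.1 * K.1 + K.1 * H.1)ᴴ = H.1 * K.1 + K.1 * H.1
    rw [conjTranspose_add, conjTranspose_mul, conjTranspose_mul, hH, hK, add_comm]⟩

lemma jp2_addl (a b c : herm2H) : jp2 (a + b) c = jp2 a c + jp2 b c := by
  apply Subtype.ext
  simp only [jp2, Submodule.coe_add, add_mul, mul_add]
  abel

lemma jp2_addr (a b c : herm2H) : jp2 a (b + c) = jp2 a b + jp2 a c := by
  apply Subtype.ext
  simp only [jp2, Submodule.coe_add, add_mul, mul_add]
  abel

lemma jp2_subl (a b c : herm2H) : jp2 (a - b) c = jp2 a c - jp2 b c := by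
  apply Subtype.ext
  simp only [jp2, Submodule.coe_sub, sub_mul, mul_sub, AddSubgroupClass.coe_sub]
  abel

lemma jp2_subr (a b c : herm2H) : jp2 a (b - c) = jp2 a b - jp2 a c := by
  apply Subtype.ext
  simp only [jp2, Submodule.coe_sub, sub_mul, mul_sub, AddSubgroupClass.coe_sub]
  abel

lemma jp2_smull (r : ℝ) (a c : herm2H) : jp2 (r • a) c = r • jp2 a c := by
  apply Subtype.ext
  simp [jp2, smul_mul_assoc, mul_smul_comm, smul_add]

lemma jp2_smulr (r : ℝ) (a c : herm2H) : jp2 a (r • c) = r • jp2 a c := by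
  apply Subtype.ext
  simp [jp2, smul_mul_assoc, mul_smul_comm, smul_add]

/-- The real Lie algebra of Jordan derivations of `H₂(ℍ)`, as a Lie subalgebra of the
endomorphisms of `H₂(ℍ)` with the commutator bracket. -/
noncomputable def jder2 : LieSubalgebra ℝ (Module.End ℝ herm2H) where
  carrier := {D | ∀ H K, D (jp2 H K) = jp2 (D H) K + jp2 H (D K)}
  add_mem' := by
    intro D1 D2 h1 h2 H K
    simp only [LinearMap.add_apply, h1 H K, h2 H K, jp2_addl, jp2_addr]
    abel
  zero_mem' := by
    intro H K
    simp only [LinearMap.zero_apply]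
    have : jp2 (0 : herm2H) K = 0 := Subtype.ext (by simp [jp2])
    have h2 : jp2 H (0 : herm2H) = 0 := Subtype.ext (by simp [jp2])
    rw [this, h2, add_zero]
  smul_mem' := by
    intro r D hD H K
    simp only [LinearMap.smul_apply, hD H K, jp2_smull, jp2_smulr, smul_add]
  lie_mem' := by
    intro D1 D2 h1 h2 H K
    replace h1 : ∀ a b : herm2H, D1 (jp2 a b) = jp2 (D1 a) b + jp2 a (D1 b) := h1
    replace h2 : ∀ a b : herm2H, D2 (jp2 a b) = jp2 (D2 a) b + jp2 a (D2 b) := h2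
    simp only [Ring.lie_def, LinearMap.sub_apply, Module.End.mul_apply, h2, map_add, h1,
      jp2_subl, jp2_subr, jp2_addl, jp2_addr]
    abel
  
/-- The real Lie algebra `so(5)` of skew-symmetric real 5×5 matrices. -/
def so5 : LieSubalgebra ℝ (Matrix (Fin 5) (Fin 5) ℝ) where
  carrier := {B | Bᵀ = -B}
  add_mem' := by
    intro a b ha hb
    simp only [Set.mem_setOf_eq] at *
    rw [transpose_add, ha, hb, neg_add]
  zero_mem' := by simp [Set.mem_setOf_eq]
  smul_mem' := by
    intro r X h
    simp only [Set.mem_setOf_eq] at *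
    rw [transpose_smul, h, smul_neg]
  lie_mem' := by
    intro X Y hX hY
    simp only [Set.mem_setOf_eq] at *
    rw [Ring.lie_def, transpose_sub, transpose_mul, transpose_mul, hX, hY]
    simp only [neg_mul, mul_neg, neg_neg, neg_sub]

section Test
open Matrix Quaternion

lemma herm_star (H : herm2H) (i j : Fin 2) : star (H.1 j i) = H.1 i j := by
  have h : (H.1)ᴴ i j = H.1 i j := by rw [H.2]
  simpa [Matrix.conjTranspose_apply] using h

noncomputable def phiFun (H : herm2H) : Fin 6 → ℝ :=
  ![(H.1 0 0).re / 2 + (H.1 1 1).re / 2, (H.1 0 0).re / 2 - (H.1 1 1).re / 2,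
    (H.1 0 1).re, (H.1 0 1).imI, (H.1 0 1).imJ, (H.1 0 1).imK]

noncomputable def phiInvMat (x : Fin 6 → ℝ) : Matrix (Fin 2) (Fin 2) ℍ[ℝ] :=
  ![![((x 0 + x 1 : ℝ) : ℍ[ℝ]), ⟨x 2, x 3, x 4, x 5⟩],
    ![⟨x 2, -x 3, -x 4, -x 5⟩, ((x 0 - x 1 : ℝ) : ℍ[ℝ])]]

lemma star_mk_H (a b c d : ℝ) : star (⟨a, b, c, d⟩ : ℍ[ℝ]) = ⟨a, -b, -c, -d⟩ := by
  apply QuaternionAlgebra.ext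
  · erw [Quaternion.re_star]
  · erw [Quaternion.imI_star]
  · erw [Quaternion.imJ_star]
  · erw [Quaternion.imK_star]

lemma phiInvMat_herm (x : Fin 6 → ℝ) : (phiInvMat x)ᴴ = phiInvMat x := by
  refine Matrix.ext fun i j => ?_
  rw [Matrix.conjTranspose_apply]
  fin_cases i <;> fin_cases j <;>
    · apply QuaternionAlgebra.ext <;>
        simp [phiInvMat, Matrix.conjTranspose_apply, Quaternion.re_coe,
          Quaternion.imI_coe, Quaternion.imJ_coe, Quaternion.imK_coe] <;> erw [star_mk_H] <;> simp

lemma vec6_five {α : Type*} (a b c d e f : α) : ![a,b,c,d,e,f] (5 : Fin 6) = f := rfl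
lemma herm_comp (H : herm2H) :
    (H.1 0 0).imI = 0 ∧ (H.1 0 0).imJ = 0 ∧ (H.1 0 0).imK = 0 ∧
    (H.1 1 1).imI = 0 ∧ (H.1 1 1).imJ = 0 ∧ (H.1 1 1).imK = 0 ∧
    (H.1 1 0).re = (H.1 0 1).re ∧ (H.1 1 0).imI = -(H.1 0 1).imI ∧
    (H.1 1 0).imJ = -(H.1 0 1).imJ ∧ (H.1 1 0).imK = -(H.1 0 1).imK := by
  have h00 := herm_star H 0 0
  have h11 := herm_star H 1 1
  have h10 := herm_star H 1 0
  refine ⟨?_, ?_, ?_, ?_, ?_, ?_, ?_, ?_, ?_, ?_⟩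
  · have := congrArg QuaternionAlgebra.imI h00; simp at this; linarith
  · have := congrArg QuaternionAlgebra.imJ h00; simp at this; linarith
  · have := congrArg QuaternionAlgebra.imK h00; simp at this; linarith
  · have := congrArg QuaternionAlgebra.imI h11; simp at this; linarith
  · have := congrArg QuaternionAlgebra.imJ h11; simp at this; linarith
  · have := congrArg QuaternionAlgebra.imK h11; simp at this; linarith
  · have := congrArg QuaternionAlgebra.re h10; simp at this; linarith
  · have := congrArg QuaternionAlgebra.imI h10; simp at this; linarith
  · have := congrArg QuaternionAlgebra.imJ h10; simp at this; linarith
  · have := congrArg QuaternionAlgebra.imK h10; simp at this; linarith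

noncomputable def phiInvH (x : Fin 6 → ℝ) : herm2H := ⟨phiInvMat x, phiInvMat_herm x⟩

lemma phi_add (H K : herm2H) : phiFun (H + K) = phiFun H + phiFun K := by
  funext a
  fin_cases a <;> simp [phiFun, vec6_five, Matrix.add_apply] <;> ring

lemma phi_smul (r : ℝ) (H : herm2H) : phiFun (r • H) = r • phiFun H := by
  funext a
  fin_cases a <;>
    simp [phiFun, vec6_five, Matrix.smul_apply, Quaternion.re_smul, smul_eq_mul] <;> ring

lemma phi_left (H : herm2H) : phiInvH (phiFun H) = H := by
  apply Subtype.ext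
  refine Matrix.ext fun i j => ?_
  obtain ⟨e1, e2, e3, e4, e5, e6, e7, e8, e9, e10⟩ := herm_comp H
  fin_cases i <;> fin_cases j <;>
    · apply QuaternionAlgebra.ext <;>
        simp [phiInvH, phiInvMat, phiFun, vec6_five, e1, e2, e3, e4, e5, e6, e7, e8, e9, e10] <;>
      ring_nf
  
lemma phi_right (x : Fin 6 → ℝ) : phiFun (phiInvH x) = x := by
  funext a
  fin_cases a <;> simp [phiFun, vec6_five, phiInvH, phiInvMat] <;> ring

noncomputable def phiE : herm2H ≃ₗ[ℝ] (Fin 6 → ℝ) :=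
  { toFun := phiFun, map_add' := phi_add, map_smul' := phi_smul,
    invFun := phiInvH, left_inv := phi_left, right_inv := phi_right }

@[simp] lemma phiE_apply (H : herm2H) : phiE H = phiFun H := rfl
@[simp] lemma phiE_symm_apply (x : Fin 6 → ℝ) : phiE.symm x = phiInvH x := rfl
/-- The transported Jordan product on `ℝ⁶`. -/
noncomputable def jp' (x y : Fin 6 → ℝ) : Fin 6 → ℝ := fun a =>
  if a = 0 then 2 * ∑ b, x b * y b else 2 * (x 0 * y a + x a * y 0)

set_option maxHeartbeats 2000000 in
lemma phi_jp (H K : herm2H) : phiFun (jp2 H K) = jp' (phiFun H) (phiFun K) := by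
  obtain ⟨e1, e2, e3, e4, e5, e6, e7, e8, e9, e10⟩ := herm_comp H
  obtain ⟨f1, f2, f3, f4, f5, f6, f7, f8, f9, f10⟩ := herm_comp K
  funext a
  fin_cases a <;>
    simp [jp2, jp', phiFun, vec6_five, Matrix.mul_apply, Matrix.add_apply,
      Fin.sum_univ_two, Fin.sum_univ_six, Quaternion.re_mul, Quaternion.imI_mul,
      Quaternion.imJ_mul, Quaternion.imK_mul, e1, e2, e3, e4, e5, e6, e7, e8, e9, e10,
      f1, f2, f3, f4, f5, f6, f7, f8, f9, f10] <;> ring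
lemma jp'_zero (x y : Fin 6 → ℝ) : jp' x y 0 = 2 * ∑ b, x b * y b := by simp [jp']

lemma jp'_succ (x y : Fin 6 → ℝ) (i : Fin 5) :
    jp' x y i.succ = 2 * (x 0 * y i.succ + x i.succ * y 0) := by
  simp [jp', (Fin.succ_ne_zero i)]

/-- Standard basis vector of `ℝ⁶`. -/
noncomputable def ee (a : Fin 6) : Fin 6 → ℝ := Pi.single a 1

lemma ee_apply (a b : Fin 6) : ee a b = if a = b then 1 else 0 := by
  simp [ee, Pi.single_apply, eq_comm]

lemma sum_mul_ee (z : Fin 6 → ℝ) (a : Fin 6) : ∑ b, z b * ee a b = z a := by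
  simp [ee_apply]

lemma sum_ee_mul (z : Fin 6 → ℝ) (a : Fin 6) : ∑ b, ee a b * z b = z a := by
  simp [ee_apply]

lemma ee_succ_zero (i : Fin 5) : ee i.succ 0 = 0 := by
  simp [ee_apply, (Fin.succ_ne_zero i)]

lemma ee_zero_succ (i : Fin 5) : ee 0 i.succ = 0 := by
  simp [ee_apply, (Fin.succ_ne_zero i).symm]

lemma ee_succ_succ (i j : Fin 5) : ee i.succ j.succ = if i = j then 1 else 0 := by
  rw [ee_apply]
  by_cases h : i = j
  · subst h; simp
  · have hne : i.succ ≠ j.succ := fun hc => h (Fin.succ_injective _ hc)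
    simp [h, hne]

/-- Derivation property for an endomorphism of `ℝ⁶` w.r.t. `jp'`. -/
def isDer (T : Module.End ℝ (Fin 6 → ℝ)) : Prop :=
  ∀ x y, T (jp' x y) = jp' (T x) y + jp' x (T y)

lemma jp'_e0_left (y : Fin 6 → ℝ) : jp' (ee 0) y = (2:ℝ) • y := by
  funext a
  induction a using Fin.cases with
  | zero => simp [jp'_zero, sum_ee_mul]
  | succ i => simp [jp'_succ, ee_apply, (Fin.succ_ne_zero i).symm]

lemma jp'_e0_right (x : Fin 6 → ℝ) : jp' x (ee 0) = (2:ℝ) • x := by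
  funext a
  induction a using Fin.cases with
  | zero => simp [jp'_zero, sum_mul_ee]
  | succ i => simp [jp'_succ, ee_apply, (Fin.succ_ne_zero i).symm]

lemma jp'_ee_succ (i j : Fin 5) :
    jp' (ee i.succ) (ee j.succ) = if i = j then (2:ℝ) • ee 0 else 0 := by
  funext a
  induction a using Fin.cases with
  | zero =>
    rw [jp'_zero, sum_ee_mul]
    rw [ee_succ_succ]
    by_cases h : i = j
    · subst h; simp [ee_apply]
    · simp [Ne.symm h, h, ee_apply]
  | succ k =>
    rw [jp'_succ, ee_succ_zero, ee_succ_zero]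
    by_cases h : i = j <;> simp [h, ee_zero_succ]

lemma isDer.e0 {T : Module.End ℝ (Fin 6 → ℝ)} (hT : isDer T) : T (ee 0) = 0 := by
  have h := hT (ee 0) (ee 0)
  rw [jp'_e0_left, LinearMap.map_smul, jp'_e0_right, jp'_e0_left] at h
  have h2 : (2:ℝ) • T (ee 0) = 0 := left_eq_add.mp h
  simpa using h2

lemma isDer.coord0 {T : Module.End ℝ (Fin 6 → ℝ)} (hT : isDer T) (j : Fin 5) :
    T (ee j.succ) 0 = 0 := by
  have h := congrFun (hT (ee j.succ) (ee j.succ)) j.succ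
  rw [jp'_ee_succ, if_pos rfl, LinearMap.map_smul, hT.e0] at h
  simp only [Pi.add_apply, jp'_succ, ee_succ_zero] at h
  simp [ee_succ_succ] at h
  linarith

lemma isDer.skew {T : Module.End ℝ (Fin 6 → ℝ)} (hT : isDer T) (i j : Fin 5) :
    T (ee j.succ) i.succ + T (ee i.succ) j.succ = 0 := by
  have h := congrFun (hT (ee i.succ) (ee j.succ)) 0
  rw [jp'_ee_succ] at h
  simp only [Pi.add_apply, jp'_zero, sum_mul_ee, sum_ee_mul] at h
  by_cases hij : i = j
  · subst hij
    rw [if_pos rfl, LinearMap.map_smul, hT.e0] at h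
    simp at h
    linarith
  · rw [if_neg hij, map_zero] at h
    simp at h
    linarith

/-- The 5×5 matrix of an endomorphism of `ℝ⁶` on the span of the last five coordinates. -/
noncomputable def matOf (T : Module.End ℝ (Fin 6 → ℝ)) : Matrix (Fin 5) (Fin 5) ℝ :=
  fun i j => T (ee j.succ) i.succ

lemma matOf_skew {T : Module.End ℝ (Fin 6 → ℝ)} (hT : isDer T) :
    (matOf T)ᵀ = -(matOf T) := by
  refine Matrix.ext fun i j => ?_
  have := hT.skew j i
  simp only [Matrix.transpose_apply, Matrix.neg_apply, matOf]
  linarith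
/-- The endomorphism of `ℝ⁶` associated to a 5×5 matrix (acting on the last 5 coords). -/
noncomputable def TB (B : Matrix (Fin 5) (Fin 5) ℝ) : Module.End ℝ (Fin 6 → ℝ) where
  toFun x := fun a => Fin.cases 0 (fun i => ∑ j, B i j * x j.succ) a
  map_add' x y := by
    funext a
    induction a using Fin.cases with
    | zero => simp
    | succ i => simp [mul_add, Finset.sum_add_distrib]
  map_smul' r x := by
    funext a
    induction a using Fin.cases with
    | zero => simp
    | succ i =>
      simp only [Fin.cases_succ, RingHom.id_apply, Pi.smul_apply, smul_eq_mul,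
        Finset.mul_sum]
      exact Finset.sum_congr rfl fun j _ => by ring

lemma TB_zero (B : Matrix (Fin 5) (Fin 5) ℝ) (x : Fin 6 → ℝ) : TB B x 0 = 0 := rfl

lemma TB_succ (B : Matrix (Fin 5) (Fin 5) ℝ) (x : Fin 6 → ℝ) (i : Fin 5) :
    TB B x i.succ = ∑ j, B i j * x j.succ := by
  simp [TB]

lemma isDer_TB {B : Matrix (Fin 5) (Fin 5) ℝ} (hB : Bᵀ = -B) : isDer (TB B) := by
  have hB' : ∀ i j, B j i = -B i j := fun i j => congrFun (congrFun hB i) j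
  intro x y
  funext a
  induction a using Fin.cases with
  | zero =>
    have e1 : ∑ b : Fin 6, TB B x b * y b
        = ∑ i : Fin 5, (∑ j, B i j * x j.succ) * y i.succ := by
      rw [Fin.sum_univ_succ]
      simp only [TB_zero, zero_mul, zero_add]
      exact Finset.sum_congr rfl fun i _ => by rw [TB_succ]
    have e2 : ∑ b : Fin 6, x b * TB B y b
        = ∑ i : Fin 5, x i.succ * ∑ j, B i j * y j.succ := by
      rw [Fin.sum_univ_succ]
      simp only [TB_zero, mul_zero, zero_add]
      exact Finset.sum_congr rfl fun i _ => by rw [TB_succ]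
    have key : ∑ i : Fin 5, (∑ j, B i j * x j.succ) * y i.succ
        + ∑ i : Fin 5, x i.succ * ∑ j, B i j * y j.succ = 0 := by
      have h1 : ∑ i : Fin 5, (∑ j, B i j * x j.succ) * y i.succ
          = ∑ i : Fin 5, ∑ j, B i j * x j.succ * y i.succ :=
        Finset.sum_congr rfl fun i _ => by rw [Finset.sum_mul]
      have h2 : ∑ i : Fin 5, x i.succ * ∑ j, B i j * y j.succ
          = ∑ i : Fin 5, ∑ j, -(B j i * x i.succ * y j.succ) :=
        Finset.sum_congr rfl fun i _ => by
          rw [Finset.mul_sum]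
          exact Finset.sum_congr rfl fun j _ => by rw [hB' j i]; ring
      rw [h1, h2, Finset.sum_comm (s := (Finset.univ : Finset (Fin 5)))
        (t := (Finset.univ : Finset (Fin 5)))
        (f := fun i j => -(B j i * x i.succ * y j.succ)), ← Finset.sum_add_distrib]
      refine Finset.sum_eq_zero fun i _ => ?_
      rw [← Finset.sum_add_distrib]
      exact Finset.sum_eq_zero fun j _ => by ring
    rw [Pi.add_apply, TB_zero, jp'_zero, jp'_zero, e1, e2]
    linarith [key]
  | succ i =>
    have l1 : TB B (jp' x y) i.succ
        = ∑ j, (2 * x 0) * (B i j * y j.succ) + ∑ j, (2 * y 0) * (B i j * x j.succ) := by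
      rw [TB_succ, ← Finset.sum_add_distrib]
      refine Finset.sum_congr rfl fun j _ => ?_
      rw [jp'_succ]; ring
    rw [Pi.add_apply, l1, ← Finset.mul_sum, ← Finset.mul_sum, jp'_succ, jp'_succ,
      TB_zero, TB_zero, TB_succ, TB_succ]
    ring
lemma TB_ee_succ (B : Matrix (Fin 5) (Fin 5) ℝ) (j : Fin 5) :
    TB B (ee j.succ) = ∑ k, B k j • ee k.succ := by
  funext c
  induction c using Fin.cases with
  | zero => simp [TB_zero, ee_succ_zero]
  | succ i =>
    rw [TB_succ]
    simp only [Finset.sum_apply, Pi.smul_apply, smul_eq_mul, ee_succ_succ]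
    simp [Finset.sum_ite_eq, Finset.sum_ite_eq']
lemma matOf_TB (B : Matrix (Fin 5) (Fin 5) ℝ) : matOf (TB B) = B := by
  refine Matrix.ext fun i j => ?_
  rw [matOf, TB_succ]
  simp [ee_succ_succ, Finset.sum_ite_eq']

lemma pi_basis_ee (a : Fin 6) : (Pi.basisFun ℝ (Fin 6)) a = ee a := by
  funext b
  simp [ee, Pi.basisFun_apply]

lemma isDer.eq_TB {T : Module.End ℝ (Fin 6 → ℝ)} (hT : isDer T) : T = TB (matOf T) := by
  refine (Pi.basisFun ℝ (Fin 6)).ext fun a => ?_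
  rw [pi_basis_ee]
  induction a using Fin.cases with
  | zero =>
    rw [hT.e0]
    funext c
    induction c using Fin.cases with
    | zero => simp [TB_zero]
    | succ i => simp [TB_succ, ee_zero_succ]
  | succ j =>
    funext c
    induction c using Fin.cases with
    | zero => rw [hT.coord0, TB_zero]
    | succ i =>
      rw [TB_succ]
      simp [ee_succ_succ, Finset.sum_ite_eq', matOf]

lemma matOf_mul {T1 T2 : Module.End ℝ (Fin 6 → ℝ)} (h2 : isDer T2) :
    matOf (T1 * T2) = matOf T1 * matOf T2 := by
  refine Matrix.ext fun i j => ?_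
  have hT2 : T2 (ee j.succ) = ∑ k, matOf T2 k j • ee k.succ := by
    conv_lhs => rw [h2.eq_TB]
    exact TB_ee_succ _ j
  have h0 : matOf (T1 * T2) i j = T1 (T2 (ee j.succ)) i.succ := rfl
  rw [h0, hT2, map_sum, Matrix.mul_apply, Finset.sum_apply]
  refine Finset.sum_congr rfl fun k _ => ?_
  rw [LinearMap.map_smul, Pi.smul_apply, smul_eq_mul]
  have h1 : matOf T1 i k = T1 (ee k.succ) i.succ := rfl
  have h2 : matOf T2 k j = T2 (ee j.succ) k.succ := rfl
  rw [h1, h2]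
  ring
/-- Conjugation of endomorphisms by `phiE`. -/
noncomputable def conjD (D : Module.End ℝ herm2H) : Module.End ℝ (Fin 6 → ℝ) :=
  (phiE.toLinearMap ∘ₗ D) ∘ₗ phiE.symm.toLinearMap

noncomputable def conjD' (T : Module.End ℝ (Fin 6 → ℝ)) : Module.End ℝ herm2H :=
  (phiE.symm.toLinearMap ∘ₗ T) ∘ₗ phiE.toLinearMap

lemma conjD_apply (D : Module.End ℝ herm2H) (x : Fin 6 → ℝ) :
    conjD D x = phiE (D (phiE.symm x)) := rfl

lemma conjD'_apply (T : Module.End ℝ (Fin 6 → ℝ)) (H : herm2H) :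
    conjD' T H = phiE.symm (T (phiE H)) := rfl

lemma conjD_conjD' (T : Module.End ℝ (Fin 6 → ℝ)) : conjD (conjD' T) = T :=
  LinearMap.ext fun x => by
    simp only [conjD_apply, conjD'_apply, LinearEquiv.apply_symm_apply,
      LinearEquiv.symm_apply_apply]

lemma conjD'_conjD (D : Module.End ℝ herm2H) : conjD' (conjD D) = D :=
  LinearMap.ext fun H => by
    simp only [conjD_apply, conjD'_apply, LinearEquiv.apply_symm_apply,
      LinearEquiv.symm_apply_apply]

lemma conjD_add (D1 D2 : Module.End ℝ herm2H) :
    conjD (D1 + D2) = conjD D1 + conjD D2 :=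
  LinearMap.ext fun x => by
    simp only [conjD_apply, LinearMap.add_apply, map_add]

lemma conjD_smul (r : ℝ) (D : Module.End ℝ herm2H) :
    conjD (r • D) = r • conjD D :=
  LinearMap.ext fun x => by
    simp only [conjD_apply, LinearMap.smul_apply, _root_.map_smul, Pi.smul_apply]

lemma conjD_mul (D1 D2 : Module.End ℝ herm2H) :
    conjD (D1 * D2) = conjD D1 * conjD D2 :=
  LinearMap.ext fun x => by
    simp only [conjD_apply, Module.End.mul_apply, LinearEquiv.symm_apply_apply]

lemma conjD_sub (D1 D2 : Module.End ℝ herm2H) :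
    conjD (D1 - D2) = conjD D1 - conjD D2 :=
  LinearMap.ext fun x => by
    simp only [conjD_apply, LinearMap.sub_apply, map_sub]

lemma mem_jder2 (D : Module.End ℝ herm2H) :
    D ∈ jder2 ↔ ∀ H K, D (jp2 H K) = jp2 (D H) K + jp2 H (D K) := Iff.rfl

lemma mem_so5 (B : Matrix (Fin 5) (Fin 5) ℝ) : B ∈ so5 ↔ Bᵀ = -B := Iff.rfl

lemma phiE_jp (H K : herm2H) : phiE (jp2 H K) = jp' (phiE H) (phiE K) := phi_jp H K

lemma jp2_eq (H K : herm2H) : jp2 H K = phiE.symm (jp' (phiE H) (phiE K)) := by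
  rw [← phiE_jp, LinearEquiv.symm_apply_apply]

lemma mem_jder2_iff (D : Module.End ℝ herm2H) : D ∈ jder2 ↔ isDer (conjD D) := by
  rw [mem_jder2]
  constructor
  · intro h x y
    have hxy : phiE.symm (jp' x y) = jp2 (phiE.symm x) (phiE.symm y) := by
      rw [jp2_eq, phiE.apply_symm_apply, phiE.apply_symm_apply]
    rw [conjD_apply, hxy, h, map_add, phiE_jp, phiE_jp]
    rw [conjD_apply, conjD_apply, phiE.apply_symm_apply, phiE.apply_symm_apply]
  · intro h H K
    apply phiE.injective
    rw [map_add, phiE_jp, phiE_jp]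
    have := h (phiE H) (phiE K)
    rw [conjD_apply, conjD_apply, conjD_apply, phiE.symm_apply_apply,
      phiE.symm_apply_apply, ← jp2_eq] at this
    exact this

set_option synthInstance.maxHeartbeats 1000000 in
set_option maxHeartbeats 2000000 in
/-- The isomorphism between the Jordan derivations and `so(5)`. -/
noncomputable def jderIso : jder2 ≃ₗ⁅ℝ⁆ so5 where
  toFun D := ⟨matOf (conjD D.1), matOf_skew ((mem_jder2_iff D.1).mp D.2)⟩
  map_add' D1 D2 := by
    apply Subtype.ext
    have : (D1 + D2 : jder2).1 = D1.1 + D2.1 := rfl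
    show matOf (conjD (D1 + D2 : jder2).1) = matOf (conjD D1.1) + matOf (conjD D2.1)
    rw [this, conjD_add]
    refine Matrix.ext fun i j => ?_
    simp [matOf]
  map_smul' r D := by
    apply Subtype.ext
    show matOf (conjD (r • D : jder2).1) = r • matOf (conjD D.1)
    have : (r • D : jder2).1 = r • D.1 := rfl
    rw [this, conjD_smul]
    refine Matrix.ext fun i j => ?_
    simp [matOf]
  map_lie' {D1 D2} := by
    apply Subtype.ext
    show matOf (conjD (⁅D1, D2⁆ : jder2).1) =
      ⁅matOf (conjD D1.1), matOf (conjD D2.1)⁆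
    have h1 : (⁅D1, D2⁆ : jder2).1 = D1.1 * D2.1 - D2.1 * D1.1 := by
      rw [LieSubalgebra.coe_bracket, Ring.lie_def]
    rw [h1, Ring.lie_def, conjD_sub, conjD_mul, conjD_mul]
    have hd1 : isDer (conjD D1.1) := (mem_jder2_iff D1.1).mp D1.2
    have hd2 : isDer (conjD D2.1) := (mem_jder2_iff D2.1).mp D2.2
    have hsub : matOf (conjD D1.1 * conjD D2.1 - conjD D2.1 * conjD D1.1)
        = matOf (conjD D1.1 * conjD D2.1) - matOf (conjD D2.1 * conjD D1.1) := by
      refine Matrix.ext fun i j => ?_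
      simp [matOf]
    rw [hsub, matOf_mul hd2, matOf_mul hd1]
  invFun B := ⟨conjD' (TB B.1), by
    rw [mem_jder2_iff, conjD_conjD']
    exact isDer_TB B.2⟩
  left_inv D := by
    apply Subtype.ext
    show conjD' (TB (matOf (conjD D.1))) = D.1
    have hd : isDer (conjD D.1) := (mem_jder2_iff D.1).mp D.2
    rw [← hd.eq_TB, conjD'_conjD]
  right_inv B := by
    apply Subtype.ext
    show matOf (conjD (conjD' (TB B.1))) = B.1
    rw [conjD_conjD', matOf_TB]

/-- The real Lie algebra of Jordan derivations of `H₂(ℍ)` (hermitian 2×2 quaternionic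
matrices with the Jordan product) is isomorphic to `so(5)`, the skew-symmetric real
5×5 matrices with the commutator bracket. -/
theorem statement16 : Nonempty (jder2 ≃ₗ⁅ℝ⁆ so5) := by
  exact ⟨jderIso⟩
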